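/- arXiv:1608.05730 — 3 statements merged into one kernel-verified Lean document; each statement's English description precedes it below -/
import Mathlib

section
/- Let H_0 = (S,T;F_0) be a simple bigraph, r_S the rank function of a matroid on S, p_T a positively intersecting supermodular set-function on T, and m_T : T → ℤ. Then the set-function p_0 on subsets of V = S ∪ T (defined via ℋ_0, r_S, p_T, m_T and the degrees d_{H_0}) is positively T-intersecting supermodular. -/
open Finset

variable {α : Type*} [DecidableEq α]

/-- The number of edges of the bigraph with edge set `E` connecting `X ⊆ S` and `Y ⊆ T`. -/
def edgesBetween (E : Finset (α × α)) (X Y : Finset α) : ℕ :=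
  (E.filter (fun e => e.1 ∈ X ∧ e.2 ∈ Y)).card

/-- The set of neighbours (in `S`) of a subset `Z ⊆ T` in the bigraph with edge set `E`. -/
def nbrs (E : Finset (α × α)) (Z : Finset α) : Finset α :=
  (E.filter (fun e => e.2 ∈ Z)).image Prod.fst

/-- The degree of a node `v ∈ S` in the bigraph with edge set `E`. -/
def degS (E : Finset (α × α)) (v : α) : ℕ := (E.filter (fun e => e.1 = v)).card

/-- The degree of a node `v ∈ T` in the bigraph with edge set `E`. -/
def degT (E : Finset (α × α)) (v : α) : ℕ := (E.filter (fun e => e.2 = v)).card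

/-- `r` is the rank function of a matroid on the ground set `S`. -/
def IsRankFn (S : Finset α) (r : Finset α → ℕ) : Prop :=
  (∀ X, X ⊆ S → r X ≤ X.card) ∧
  (∀ X Y, X ⊆ Y → Y ⊆ S → r X ≤ r Y) ∧
  (∀ X Y, X ⊆ S → Y ⊆ S → r (X ∪ Y) + r (X ∩ Y) ≤ r X + r Y)

/-- `V' ∈ ℋ₀`: no arc of the orientation of `H₀` (from `S` to `T`) enters `V'`. -/
def memH₀ (F₀ : Finset (α × α)) (V' : Finset α) : Prop :=
  ∀ e ∈ F₀, e.2 ∈ V' → e.1 ∈ V'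

instance (F₀ : Finset (α × α)) (V' : Finset α) : Decidable (memH₀ F₀ V') := by
  unfold memH₀; infer_instance

/-- The set-function `p₀` of the paper:
`p₀(V') = max{p_T({y}) − r_S(X), m_T(y) − |X| + d_{H₀}(y)}` if `V' = X ∪ {y} ∈ ℋ₀`
with `X ⊆ S`, `y ∈ T`; `p₀(V') = p_T(Y) − r_S(X)` if `V' = X ∪ Y ∈ ℋ₀` with `X ⊆ S`,
`Y ⊆ T`, `|Y| ≥ 2`; and `p₀(V') = 0` otherwise. -/
def p₀ (S T : Finset α) (F₀ : Finset (α × α)) (rS : Finset α → ℕ)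
    (pT : Finset α → ℤ) (m : α → ℤ) (V' : Finset α) : ℤ :=
  if V' ⊆ S ∪ T ∧ memH₀ F₀ V' then
    if (V' ∩ T).card = 1 then
      max (pT (V' ∩ T) - (rS (V' ∩ S) : ℤ))
        ((∑ y ∈ V' ∩ T, m y) - ((V' ∩ S).card : ℤ) + ∑ y ∈ V' ∩ T, (degT F₀ y : ℤ))
    else if 2 ≤ (V' ∩ T).card then pT (V' ∩ T) - (rS (V' ∩ S) : ℤ)
    else 0
  else 0

/-- `V_s = {v ∈ V − s : sv ∉ F₀}`. -/
def Vs (S T : Finset α) (F₀ : Finset (α × α)) (s : α) : Finset α :=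
  ((S ∪ T).erase s).filter (fun v => (s, v) ∉ F₀)

/-- The set-function `p₁` of the paper: `p₁(V_s) = m_S(s)` for `s ∈ S`
(such an `s` is unique when it exists), and `p₁(V') = p₀(V')` otherwise. -/
def p₁ (S T : Finset α) (F₀ : Finset (α × α)) (rS : Finset α → ℕ)
    (pT : Finset α → ℤ) (m : α → ℤ) (V' : Finset α) : ℤ :=
  if ∃ s ∈ S, V' = Vs S T F₀ s then
    ∑ s ∈ S.filter (fun s => V' = Vs S T F₀ s), m s
  else p₀ S T F₀ rS pT m V'

/-- Condition (★) of the paper: for every `Y ⊆ T`, `X ⊆ S` and every subpartition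
`𝒯 = {T₁, …, T_q}` of `T − Y` into nonempty sets,
`m̃(X) + m̃(Y) − d_{G₀}(X,Y) + ∑ᵢ (p_T(Tᵢ) − r_S(X ∪ Γ_{H₀}(Tᵢ))) ≤ γ`,
where `G₀ = (S ×ˢ T) \ F₀` is the bipartite complement of `H₀`. -/
def StarCond (S T : Finset α) (F₀ : Finset (α × α)) (rS : Finset α → ℕ)
    (pT : Finset α → ℤ) (m : α → ℤ) (γ : ℤ) : Prop :=
  ∀ X ⊆ S, ∀ Y ⊆ T, ∀ 𝒯 : Finset (Finset α),
    (∀ Ti ∈ 𝒯, Ti.Nonempty ∧ Ti ⊆ T \ Y) →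
    (∀ T₁ ∈ 𝒯, ∀ T₂ ∈ 𝒯, T₁ ≠ T₂ → Disjoint T₁ T₂) →
    (∑ v ∈ X, m v) + (∑ v ∈ Y, m v)
        - (edgesBetween ((S ×ˢ T) \ F₀) X Y : ℤ)
        + ∑ Ti ∈ 𝒯, (pT Ti - (rS (X ∪ nbrs F₀ Ti) : ℤ)) ≤ γ

lemma memH₀_inter {F₀ : Finset (α × α)} {X Y : Finset α}
    (hX : memH₀ F₀ X) (hY : memH₀ F₀ Y) : memH₀ F₀ (X ∩ Y) := by
  intro e he h2
  simp only [Finset.mem_inter] at h2 ⊢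
  exact ⟨hX e he h2.1, hY e he h2.2⟩

lemma memH₀_union {F₀ : Finset (α × α)} {X Y : Finset α}
    (hX : memH₀ F₀ X) (hY : memH₀ F₀ Y) : memH₀ F₀ (X ∪ Y) := by
  intro e he h2
  simp only [Finset.mem_union] at h2 ⊢
  rcases h2 with h | h
  · exact Or.inl (hX e he h)
  · exact Or.inr (hY e he h)

lemma p₀_ge_qf (S T : Finset α) (F₀ : Finset (α × α)) (rS : Finset α → ℕ)
    (pT : Finset α → ℤ) (m : α → ℤ) {V' : Finset α}
    (hsub : V' ⊆ S ∪ T) (hmem : memH₀ F₀ V') (hcard : 1 ≤ (V' ∩ T).card) :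
    pT (V' ∩ T) - (rS (V' ∩ S) : ℤ) ≤ p₀ S T F₀ rS pT m V' := by
  unfold p₀
  rw [if_pos ⟨hsub, hmem⟩]
  rcases eq_or_lt_of_le hcard with h | h
  · rw [if_pos h.symm]
    exact le_max_left _ _
  · rw [if_neg (by omega), if_pos (by omega : 2 ≤ (V' ∩ T).card)]

lemma p₀_ge_qg (S T : Finset α) (F₀ : Finset (α × α)) (rS : Finset α → ℕ)
    (pT : Finset α → ℤ) (m : α → ℤ) {V' : Finset α}
    (hsub : V' ⊆ S ∪ T) (hmem : memH₀ F₀ V') (hcard : (V' ∩ T).card = 1) :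
    (∑ y ∈ V' ∩ T, m y) - ((V' ∩ S).card : ℤ) + (∑ y ∈ V' ∩ T, (degT F₀ y : ℤ)) ≤
      p₀ S T F₀ rS pT m V' := by
  unfold p₀
  rw [if_pos ⟨hsub, hmem⟩, if_pos hcard]
  exact le_max_right _ _

lemma p₀_pos_cases (S T : Finset α) (F₀ : Finset (α × α)) (rS : Finset α → ℕ)
    (pT : Finset α → ℤ) (m : α → ℤ) {V' : Finset α}
    (h : 0 < p₀ S T F₀ rS pT m V') :
    memH₀ F₀ V' ∧ 1 ≤ (V' ∩ T).card ∧
    ((0 < pT (V' ∩ T) - (rS (V' ∩ S) : ℤ) ∧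
        p₀ S T F₀ rS pT m V' = pT (V' ∩ T) - (rS (V' ∩ S) : ℤ)) ∨
     ((V' ∩ T).card = 1 ∧
        0 < (∑ y ∈ V' ∩ T, m y) - ((V' ∩ S).card : ℤ) + (∑ y ∈ V' ∩ T, (degT F₀ y : ℤ)) ∧
        p₀ S T F₀ rS pT m V' =
          (∑ y ∈ V' ∩ T, m y) - ((V' ∩ S).card : ℤ) + (∑ y ∈ V' ∩ T, (degT F₀ y : ℤ)))) := by
  unfold p₀ at h ⊢
  split_ifs at h ⊢ with h1 h2 h3
  · refine ⟨h1.2, by omega, ?_⟩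
    rcases max_choice (pT (V' ∩ T) - (rS (V' ∩ S) : ℤ))
      ((∑ y ∈ V' ∩ T, m y) - ((V' ∩ S).card : ℤ) + ∑ y ∈ V' ∩ T, (degT F₀ y : ℤ)) with hm | hm
    · exact Or.inl ⟨by rw [← hm]; exact h, by rw [hm]⟩
    · exact Or.inr ⟨h2, by rw [← hm]; exact h, by rw [hm]⟩
  · exact ⟨h1.2, by omega, Or.inl ⟨h, rfl⟩⟩
  · exact absurd h (lt_irrefl 0)
  · exact absurd h (lt_irrefl 0)

lemma rank_union_le (S : Finset α) (rS : Finset α → ℕ) (hrS : IsRankFn S rS)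
    {A B : Finset α} (hA : A ⊆ S) (hB : B ⊆ S) :
    rS (A ∪ B) ≤ rS A + (B \ A).card := by
  have h := hrS.2.2 A (B \ A) hA ((Finset.sdiff_subset).trans hB)
  rw [Finset.union_sdiff_self_eq_union] at h
  have h2 := hrS.1 (B \ A) ((Finset.sdiff_subset).trans hB)
  omega

lemma inter_inter_eq (X Y T : Finset α) : (X ∩ Y) ∩ T = (X ∩ T) ∩ (Y ∩ T) := by
  ext a; simp only [Finset.mem_inter]; tauto

lemma union_inter_eq (X Y T : Finset α) : (X ∪ Y) ∩ T = (X ∩ T) ∪ (Y ∩ T) := by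
  ext a; simp only [Finset.mem_inter, Finset.mem_union]; tauto

/-- **Lemma 3 of the paper.** The set-function `p₀` is positively `T`-intersecting
supermodular: the supermodular inequality holds for any two non-comparable subsets
`X, Y` of `V = S ∪ T` with `X ∩ Y ∩ T ≠ ∅`, `p₀(X) > 0` and `p₀(Y) > 0`. -/
theorem p₀_positively_T_intersecting_supermodular
    (S T : Finset α) (hST : Disjoint S T) (hS : S.Nonempty) (hT : T.Nonempty)
    (F₀ : Finset (α × α)) (hF₀ : F₀ ⊆ S ×ˢ T)
    (rS : Finset α → ℕ) (hrS : IsRankFn S rS)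
    (pT : Finset α → ℤ)
    -- `p_T` is positively intersecting supermodular on `T`
    (hpT : ∀ X Y : Finset α, X ⊆ T → Y ⊆ T → (X ∩ Y).Nonempty →
      0 < pT X → 0 < pT Y → pT X + pT Y ≤ pT (X ∩ Y) + pT (X ∪ Y))
    (m : α → ℤ) :
    ∀ X Y : Finset α, X ⊆ S ∪ T → Y ⊆ S ∪ T → ¬ X ⊆ Y → ¬ Y ⊆ X →
      (X ∩ Y ∩ T).Nonempty →
      0 < p₀ S T F₀ rS pT m X → 0 < p₀ S T F₀ rS pT m Y →
      p₀ S T F₀ rS pT m X + p₀ S T F₀ rS pT m Y ≤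
        p₀ S T F₀ rS pT m (X ∩ Y) + p₀ S T F₀ rS pT m (X ∪ Y) := by
  intro X Y hX hY _ _ hInt hPX hPY
  obtain ⟨hmX, hcX, hcaseX⟩ := p₀_pos_cases S T F₀ rS pT m hPX
  obtain ⟨hmY, hcY, hcaseY⟩ := p₀_pos_cases S T F₀ rS pT m hPY
  have hsubI : X ∩ Y ⊆ S ∪ T := (Finset.inter_subset_left).trans hX
  have hsubU : X ∪ Y ⊆ S ∪ T := Finset.union_subset hX hY
  have hmI := memH₀_inter hmX hmY
  have hmU := memH₀_union hmX hmY
  have hIT : (X ∩ Y) ∩ T = (X ∩ T) ∩ (Y ∩ T) := inter_inter_eq X Y T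
  have hIS : (X ∩ Y) ∩ S = (X ∩ S) ∩ (Y ∩ S) := inter_inter_eq X Y S
  have hUT : (X ∪ Y) ∩ T = (X ∩ T) ∪ (Y ∩ T) := union_inter_eq X Y T
  have hUS : (X ∪ Y) ∩ S = (X ∩ S) ∪ (Y ∩ S) := union_inter_eq X Y S
  have hABne : ((X ∩ T) ∩ (Y ∩ T)).Nonempty := by rwa [hIT] at hInt
  have hcI : 1 ≤ ((X ∩ Y) ∩ T).card := by rw [hIT]; exact hABne.card_pos
  have hcU : 1 ≤ ((X ∪ Y) ∩ T).card := by
    rw [hUT]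
    have hXTne : (X ∩ T).Nonempty := Finset.card_pos.mp hcX
    exact Finset.card_pos.mpr (hXTne.mono Finset.subset_union_left)
  have hXS : X ∩ S ⊆ S := Finset.inter_subset_right
  have hYS : Y ∩ S ⊆ S := Finset.inter_subset_right
  rcases hcaseX with ⟨hposX, heqX⟩ | ⟨hc1X, hposX, heqX⟩ <;>
    rcases hcaseY with ⟨hposY, heqY⟩ | ⟨hc1Y, hposY, heqY⟩
  · -- both on the pT arm
    have hpTA : 0 < pT (X ∩ T) := by
      have := Int.natCast_nonneg (rS (X ∩ S)); linarith
    have hpTB : 0 < pT (Y ∩ T) := by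
      have := Int.natCast_nonneg (rS (Y ∩ S)); linarith
    have key := hpT (X ∩ T) (Y ∩ T) Finset.inter_subset_right
      Finset.inter_subset_right hABne hpTA hpTB
    have hr := hrS.2.2 (X ∩ S) (Y ∩ S) hXS hYS
    have hI := p₀_ge_qf S T F₀ rS pT m hsubI hmI hcI
    have hU := p₀_ge_qf S T F₀ rS pT m hsubU hmU hcU
    rw [hIT, hIS] at hI
    rw [hUT, hUS] at hU
    rw [heqX, heqY]
    have hr' : ((rS ((X ∩ S) ∪ (Y ∩ S)) : ℤ)) + (rS ((X ∩ S) ∩ (Y ∩ S)) : ℤ) ≤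
        (rS (X ∩ S) : ℤ) + (rS (Y ∩ S) : ℤ) := by exact_mod_cast hr
    linarith
  · -- X on pT arm, Y on degree arm (card (Y ∩ T) = 1)
    have hABB : (X ∩ T) ∩ (Y ∩ T) = Y ∩ T := by
      apply Finset.eq_of_subset_of_card_le Finset.inter_subset_right
      rw [hc1Y]; exact hABne.card_pos
    have hBA : Y ∩ T ⊆ X ∩ T := by rw [← hABB]; exact Finset.inter_subset_left
    have hABU : (X ∩ T) ∪ (Y ∩ T) = X ∩ T := Finset.union_eq_left.mpr hBA
    have hcI1 : ((X ∩ Y) ∩ T).card = 1 := by rw [hIT, hABB]; exact hc1Y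
    have hI := p₀_ge_qg S T F₀ rS pT m hsubI hmI hcI1
    have hU := p₀_ge_qf S T F₀ rS pT m hsubU hmU hcU
    rw [hIT, hABB, hIS, Finset.inter_comm (X ∩ S) (Y ∩ S)] at hI
    rw [hUT, hABU, hUS] at hU
    rw [heqX, heqY]
    have hru := rank_union_le S rS hrS hXS hYS
    have hru' : (rS ((X ∩ S) ∪ (Y ∩ S)) : ℤ) ≤
        (rS (X ∩ S) : ℤ) + (((Y ∩ S) \ (X ∩ S)).card : ℤ) := by exact_mod_cast hru
    have hcard := Finset.card_sdiff_add_card_inter (Y ∩ S) (X ∩ S)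
    have hcard' : (((Y ∩ S) \ (X ∩ S)).card : ℤ) + (((Y ∩ S) ∩ (X ∩ S)).card : ℤ) =
        ((Y ∩ S).card : ℤ) := by exact_mod_cast hcard
    linarith
  · -- X on degree arm (card (X ∩ T) = 1), Y on pT arm
    have hABA : (X ∩ T) ∩ (Y ∩ T) = X ∩ T := by
      apply Finset.eq_of_subset_of_card_le Finset.inter_subset_left
      rw [hc1X]; exact hABne.card_pos
    have hAB : X ∩ T ⊆ Y ∩ T := by rw [← hABA]; exact Finset.inter_subset_right
    have hABU : (X ∩ T) ∪ (Y ∩ T) = Y ∩ T := Finset.union_eq_right.mpr hAB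
    have hcI1 : ((X ∩ Y) ∩ T).card = 1 := by rw [hIT, hABA]; exact hc1X
    have hI := p₀_ge_qg S T F₀ rS pT m hsubI hmI hcI1
    have hU := p₀_ge_qf S T F₀ rS pT m hsubU hmU hcU
    rw [hIT, hABA, hIS] at hI
    rw [hUT, hABU, hUS] at hU
    rw [heqX, heqY]
    have hru := rank_union_le S rS hrS hYS hXS
    rw [Finset.union_comm (Y ∩ S) (X ∩ S)] at hru
    have hru' : (rS ((X ∩ S) ∪ (Y ∩ S)) : ℤ) ≤
        (rS (Y ∩ S) : ℤ) + (((X ∩ S) \ (Y ∩ S)).card : ℤ) := by exact_mod_cast hru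
    have hcard := Finset.card_sdiff_add_card_inter (X ∩ S) (Y ∩ S)
    have hcard' : (((X ∩ S) \ (Y ∩ S)).card : ℤ) + (((X ∩ S) ∩ (Y ∩ S)).card : ℤ) =
        ((X ∩ S).card : ℤ) := by exact_mod_cast hcard
    linarith
  · -- both on the degree arm: card (X ∩ T) = card (Y ∩ T) = 1
    have hIA : (X ∩ T) ∩ (Y ∩ T) = X ∩ T := by
      apply Finset.eq_of_subset_of_card_le Finset.inter_subset_left
      rw [hc1X]; exact hABne.card_pos
    have hIB : (X ∩ T) ∩ (Y ∩ T) = Y ∩ T := by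
      apply Finset.eq_of_subset_of_card_le Finset.inter_subset_right
      rw [hc1Y]; exact hABne.card_pos
    have hABeq : X ∩ T = Y ∩ T := hIA.symm.trans hIB
    have hABU : (X ∩ T) ∪ (Y ∩ T) = X ∩ T := by rw [← hABeq, Finset.union_self]
    have hcI1 : ((X ∩ Y) ∩ T).card = 1 := by rw [hIT, hIA]; exact hc1X
    have hcU1 : ((X ∪ Y) ∩ T).card = 1 := by rw [hUT, hABU]; exact hc1X
    have hI := p₀_ge_qg S T F₀ rS pT m hsubI hmI hcI1
    have hU := p₀_ge_qg S T F₀ rS pT m hsubU hmU hcU1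
    rw [hIT, hIA, hIS] at hI
    rw [hUT, hABU, hUS] at hU
    rw [← hABeq] at heqY
    rw [heqX, heqY]
    have hcard := Finset.card_inter_add_card_union (X ∩ S) (Y ∩ S)
    have hcard' : (((X ∩ S) ∩ (Y ∩ S)).card : ℤ) + (((X ∩ S) ∪ (Y ∩ S)).card : ℤ) =
        ((X ∩ S).card : ℤ) + ((Y ∩ S).card : ℤ) := by exact_mod_cast hcard
    linarith
end

section
/- Let H_0 = (S,T;F_0) be a simple bigraph with bipartite complement G_0, r_S the rank function of a matroid on S, p_T a positively intersecting supermodular set-function on T, and m_V = (m_S, m_T) a degree-specification with m̃_S(S) = m̃_T(T) = γ. Let p_0 and p_1 be the associated set-functions and V_s = {v ∈ V − s : sv ∉ F_0} for s ∈ S. If Condition (★) holds, then p_1(V_s) = m_S(s) ≥ p_0(V_s) for every s ∈ S. -/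
open Finset

variable {α : Type*} [DecidableEq α]

lemma Vs_inter_S (S T : Finset α) (hST : Disjoint S T) (F₀ : Finset (α × α))
    (hF₀ : F₀ ⊆ S ×ˢ T) (s : α) : Vs S T F₀ s ∩ S = S.erase s := by
  ext v
  simp only [Vs, mem_inter, mem_filter, mem_erase, mem_union]
  constructor
  · rintro ⟨⟨⟨hvs, _⟩, _⟩, hvS⟩
    exact ⟨hvs, hvS⟩
  · rintro ⟨hvs, hvS⟩
    refine ⟨⟨⟨hvs, Or.inl hvS⟩, fun hmem => ?_⟩, hvS⟩
    have := (mem_product.mp (hF₀ hmem)).2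
    exact (disjoint_left.mp hST hvS) this

lemma Vs_inter_T (S T : Finset α) (hST : Disjoint S T) (F₀ : Finset (α × α))
    (s : α) (hs : s ∈ S) :
    Vs S T F₀ s ∩ T = T.filter (fun t => (s, t) ∉ F₀) := by
  ext v
  simp only [Vs, mem_inter, mem_filter, mem_erase, mem_union]
  constructor
  · rintro ⟨⟨⟨_, _⟩, hF⟩, hvT⟩
    exact ⟨hvT, hF⟩
  · rintro ⟨hvT, hF⟩
    have hvs : v ≠ s := fun h => (disjoint_left.mp hST hs) (h ▸ hvT)
    exact ⟨⟨⟨hvs, Or.inr hvT⟩, hF⟩, hvT⟩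

lemma edgesBetween_empty_right (E : Finset (α × α)) (X : Finset α) :
    edgesBetween E X (∅ : Finset α) = 0 := by
  simp [edgesBetween]

lemma edges_plus_deg (S T : Finset α) (hST : Disjoint S T) (F₀ : Finset (α × α))
    (hF₀ : F₀ ⊆ S ×ˢ T) (s y : α) (hs : s ∈ S) (hy : y ∈ T) (hsy : (s, y) ∉ F₀) :
    edgesBetween ((S ×ˢ T) \ F₀) (S.erase s) {y} + degT F₀ y = (S.erase s).card := by
  have hinj : Function.Injective (fun a : α => (a, y)) := by
    intro a b hab; exact (Prod.mk.injEq .. ▸ hab).1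
  have h1 : ((S ×ˢ T) \ F₀).filter (fun e => e.1 ∈ S.erase s ∧ e.2 ∈ ({y} : Finset α))
      = ((S.erase s).filter (fun a => (a, y) ∉ F₀)).image (fun a => (a, y)) := by
    ext e
    simp only [mem_filter, mem_sdiff, mem_image, mem_singleton, mem_product]
    constructor
    · rintro ⟨⟨⟨he1, he2⟩, heF⟩, heX, hey⟩
      exact ⟨e.1, ⟨heX, by rw [← hey, Prod.mk.eta]; exact heF⟩, by rw [← hey, Prod.mk.eta]⟩
    · rintro ⟨a, ⟨haX, haF⟩, rfl⟩
      exact ⟨⟨⟨mem_of_mem_erase haX, hy⟩, haF⟩, haX, rfl⟩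
  have h2 : F₀.filter (fun e => e.2 = y)
      = ((S.erase s).filter (fun a => (a, y) ∈ F₀)).image (fun a => (a, y)) := by
    ext e
    simp only [mem_filter, mem_image]
    constructor
    · rintro ⟨heF, hey⟩
      have he1 : e.1 ∈ S := (mem_product.mp (hF₀ heF)).1
      have he1s : e.1 ≠ s := by
        rintro rfl
        apply hsy
        rwa [← hey, Prod.mk.eta]
      refine ⟨e.1, ⟨mem_erase.mpr ⟨he1s, he1⟩, by rwa [← hey, Prod.mk.eta]⟩, by
        rw [← hey, Prod.mk.eta]⟩
    · rintro ⟨a, ⟨_, haF⟩, rfl⟩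
      exact ⟨haF, rfl⟩
  have hsplit := Finset.card_filter_add_card_filter_not
    (s := S.erase s) (p := fun a => (a, y) ∈ F₀)
  beta_reduce at hsplit
  rw [edgesBetween, degT, h1, h2, Finset.card_image_of_injective _ hinj,
    Finset.card_image_of_injective _ hinj]
  omega

lemma nbrs_subset_erase (S T : Finset α) (F₀ : Finset (α × α))
    (hF₀ : F₀ ⊆ S ×ˢ T) (s : α) :
    nbrs F₀ (T.filter (fun t => (s, t) ∉ F₀)) ⊆ S.erase s := by
  intro a ha
  simp only [nbrs, mem_image, mem_filter] at ha
  obtain ⟨e, ⟨heF, het, hsF⟩, rfl⟩ := ha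
  refine mem_erase.mpr ⟨fun h => hsF ?_, (mem_product.mp (hF₀ heF)).1⟩
  rwa [← h, Prod.mk.eta]

/-- **Claim 5 of the paper.** If Condition (★) holds, then
`p₁(V_s) = m_S(s) ≥ p₀(V_s)` for every `s ∈ S`. -/
theorem p₁_eq_mS_ge_p₀_on_Vs
    (S T : Finset α) (hST : Disjoint S T) (hS : S.Nonempty) (hT : T.Nonempty)
    (F₀ : Finset (α × α)) (hF₀ : F₀ ⊆ S ×ˢ T)
    (rS : Finset α → ℕ) (hrS : IsRankFn S rS)
    (pT : Finset α → ℤ)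
    -- `p_T` is positively intersecting supermodular on `T`
    (hpT : ∀ X Y : Finset α, X ⊆ T → Y ⊆ T → (X ∩ Y).Nonempty →
      0 < pT X → 0 < pT Y → pT X + pT Y ≤ pT (X ∩ Y) + pT (X ∪ Y))
    (m : α → ℤ) (γ : ℤ)
    (hγS : ∑ v ∈ S, m v = γ) (hγT : ∑ v ∈ T, m v = γ)
    (hstar : StarCond S T F₀ rS pT m γ) :
    ∀ s ∈ S, p₁ S T F₀ rS pT m (Vs S T F₀ s) = m s ∧
      p₀ S T F₀ rS pT m (Vs S T F₀ s) ≤ m s := by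
  intro s hs
  have hVS := Vs_inter_S S T hST F₀ hF₀ s
  have hVT := Vs_inter_T S T hST F₀ s hs
  set X := S.erase s with hXdef
  set Y := T.filter (fun t => (s, t) ∉ F₀) with hYdef
  have hXS : X ⊆ S := erase_subset s S
  have hYT : Y ⊆ T := filter_subset _ T
  have hsumX : ∑ v ∈ X, m v = γ - m s := by
    have h := Finset.add_sum_erase S m hs
    rw [hγS] at h
    linarith
  -- star with 𝒯 = ∅, Y = ∅ : 0 ≤ m s
  have star0 : (0 : ℤ) ≤ m s := by
    have h := hstar X hXS ∅ (empty_subset T) ∅ (by simp) (by simp)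
    simp only [sum_empty, edgesBetween_empty_right, Nat.cast_zero] at h
    linarith
  -- star with 𝒯 = {Y} (when Y nonempty) : pT Y - rS X ≤ m s
  have star2 : Y.Nonempty → pT Y - (rS X : ℤ) ≤ m s := by
    intro hYne
    have h := hstar X hXS ∅ (empty_subset T) {Y}
      (by intro Ti hTi; rw [mem_singleton] at hTi; subst hTi
          exact ⟨hYne, by rw [sdiff_empty]; exact hYT⟩)
      (by intro T₁ h₁ T₂ h₂ hne
          rw [mem_singleton] at h₁ h₂; exact absurd (h₁.trans h₂.symm) hne)
    rw [sum_singleton] at h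
    have hnb : X ∪ nbrs F₀ Y = X :=
      union_eq_left.mpr (nbrs_subset_erase S T F₀ hF₀ s)
    rw [hnb] at h
    simp only [sum_empty, edgesBetween_empty_right, Nat.cast_zero] at h
    linarith
  -- membership condition of p₀
  have hsub : Vs S T F₀ s ⊆ S ∪ T := (filter_subset _ _).trans (erase_subset _ _)
  have hmem : memH₀ F₀ (Vs S T F₀ s) := by
    intro e he he2
    have hprod := mem_product.mp (hF₀ he)
    simp only [Vs, mem_filter, mem_erase, mem_union] at he2 ⊢
    obtain ⟨⟨he2s, _⟩, he2F⟩ := he2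
    have he1s : e.1 ≠ s := by
      rintro h
      apply he2F
      rw [← h, Prod.mk.eta]
      exact he
    refine ⟨⟨he1s, Or.inl hprod.1⟩, fun hc => ?_⟩
    exact (disjoint_left.mp hST hprod.1) (mem_product.mp (hF₀ hc)).2
  have hp₀le : p₀ S T F₀ rS pT m (Vs S T F₀ s) ≤ m s := by
    rw [p₀, if_pos ⟨hsub, hmem⟩, hVT, hVS]
    by_cases h1 : Y.card = 1
    · rw [if_pos h1]
      obtain ⟨y, hy⟩ := card_eq_one.mp h1
      have hyY : y ∈ Y := by rw [hy]; exact mem_singleton_self y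
      rw [hYdef, mem_filter] at hyY
      obtain ⟨hyT, hsy⟩ := hyY
      refine max_le (star2 ⟨y, by rw [hy]; exact mem_singleton_self y⟩) ?_
      -- star with Y' = {y}, 𝒯 = ∅
      have h := hstar X hXS {y} (by simp [hyT]) ∅ (by simp) (by simp)
      simp only [sum_empty, sum_singleton, add_zero] at h
      have hedge := edges_plus_deg S T hST F₀ hF₀ s y hs hyT hsy
      rw [hy, sum_singleton, sum_singleton]
      have hcast : (edgesBetween ((S ×ˢ T) \ F₀) X {y} : ℤ) + (degT F₀ y : ℤ)
          = (X.card : ℤ) := by exact_mod_cast congrArg Nat.cast hedge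
      linarith
    · rw [if_neg h1]
      by_cases h2 : 2 ≤ Y.card
      · rw [if_pos h2]
        exact star2 (card_pos.mp (by omega))
      · rw [if_neg h2]
        exact star0
  refine ⟨?_, hp₀le⟩
  have hex : ∃ s' ∈ S, Vs S T F₀ s = Vs S T F₀ s' := ⟨s, hs, rfl⟩
  rw [p₁, if_pos hex]
  have hfe : S.filter (fun s' => Vs S T F₀ s = Vs S T F₀ s') = {s} := by
    ext s'
    simp only [mem_filter, mem_singleton]
    constructor
    · rintro ⟨hs', heq⟩
      have h1 : Vs S T F₀ s ∩ S = S.erase s := hVS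
      have h2 : Vs S T F₀ s' ∩ S = S.erase s' := Vs_inter_S S T hST F₀ hF₀ s'
      rw [heq, h2] at h1
      have : s ∉ S.erase s := notMem_erase s S
      rw [← h1] at this
      by_contra hne
      exact this (mem_erase.mpr ⟨fun h => hne h.symm, hs⟩)
    · rintro rfl
      exact ⟨hs, rfl⟩
  rw [hfe, sum_singleton]
end

section
/- A simple bigraph G_0 = (S,T;E_0) has a subgraph fitting a degree-specification (m_S, m_T) with m̃_S(S) = m̃_T(T) = γ if and only if m̃_S(X) + m̃_T(Y) − d_{G_0}(X,Y) ≤ γ holds for every X ⊆ S and Y ⊆ T. -/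
open Finset

variable {α : Type*} [DecidableEq α]

namespace OreAux

variable {α : Type*} [DecidableEq α]

abbrev V (α : Type*) := (α × α) ⊕ (α × ℕ)

def copies (v : α) (n : ℕ) : Finset (V α) :=
  (Finset.range n).image (fun i => Sum.inr (v, i))

lemma mem_copies {v : α} {n : ℕ} {x : V α} :
    x ∈ copies v n ↔ ∃ i, i < n ∧ x = Sum.inr (v, i) := by
  simp [copies, eq_comm (a := x)]

lemma card_copies (v : α) (n : ℕ) : (copies v n).card = n := by
  rw [copies, Finset.card_image_of_injective, Finset.card_range]
  intro a b h; simpa using h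

def nbr (E₀ : Finset (α × α)) (T : Finset α) (m' : α → ℕ) (N : ℕ) : V α → Finset (V α)
  | Sum.inl e =>
      if e ∈ E₀ then insert (Sum.inl e) (copies e.1 (m' e.1)) else {Sum.inl e}
  | Sum.inr (v, j) =>
      if v ∈ T ∧ j < m' v then (E₀.filter (fun e => e.2 = v)).image Sum.inl
      else {Sum.inr (v, j + N)}

def side (E₀ : Finset (α × α)) (W : Finset α) (m' : α → ℕ) : Finset (V α) :=
  E₀.image Sum.inl ∪ W.biUnion (fun w => copies w (m' w))

lemma card_side (E₀ : Finset (α × α)) (W : Finset α) (m' : α → ℕ) :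
    (side E₀ W m').card = E₀.card + ∑ w ∈ W, m' w := by
  rw [side, card_union_of_disjoint, Finset.card_image_of_injective _ Sum.inl_injective,
    Finset.card_biUnion]
  · simp [card_copies]
  · intro x hx y hy hxy
    simp only [Finset.disjoint_left, mem_copies]
    rintro a ⟨i, hi, rfl⟩ ⟨j, hj, h⟩
    exact hxy (congrArg Prod.fst (Sum.inr.inj h))
  · simp only [Finset.disjoint_left, Finset.mem_image, Finset.mem_biUnion, mem_copies]
    rintro a ⟨e, he, rfl⟩ ⟨w, hw, i, hi, h⟩
    exact absurd h (by simp)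

lemma mem_side {E₀ : Finset (α × α)} {W : Finset α} {m' : α → ℕ} {x : V α} :
    x ∈ side E₀ W m' ↔ (∃ e ∈ E₀, x = Sum.inl e) ∨ (∃ w ∈ W, ∃ i < m' w, x = Sum.inr (w, i)) := by
  simp [side, mem_copies, eq_comm (a := x)]


def shiftN (N : ℕ) : V α → V α := Sum.map id (fun p => (p.1, p.2 + N))

lemma shiftN_injective (N : ℕ) : Function.Injective (shiftN (α := α) N) := by
  rintro (e | ⟨v, j⟩) (e' | ⟨v', j'⟩) h <;> simp [shiftN] at h
  · simp [h]
  · obtain ⟨h1, h2⟩ := h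
    simp [h1]; omega

lemma hall_condition (S T : Finset α) (E₀ : Finset (α × α)) (hE₀ : E₀ ⊆ S ×ˢ T)
    (m' : α → ℕ)
    (hcond : ∀ X ⊆ S, ∀ Y ⊆ T,
      (∑ v ∈ Y, m' v) + edgesBetween E₀ X Y ≤
        (∑ v ∈ X, m' v) + (E₀.filter (fun e => e.2 ∈ Y)).card)
    (s : Finset (V α)) :
    s.card ≤ (s.biUnion (nbr E₀ T m' (∑ v ∈ S, m' v))).card := by
  classical
  set N := ∑ v ∈ S, m' v with hN
  set sA1 := s ∩ E₀.image Sum.inl with hsA1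
  set sA2 := s ∩ T.biUnion (fun t => copies t (m' t)) with hsA2
  set sJ := s \ (sA1 ∪ sA2) with hsJ
  set sJ1 := sJ.filter (fun x => x.isLeft) with hsJ1
  set sJ2 := sJ.filter (fun x => x.isRight) with hsJ2
  set F := E₀.filter (fun e => Sum.inl e ∈ s) with hF
  set X' := F.image Prod.fst with hX'
  set Y' := T.filter (fun t => ((copies t (m' t)) ∩ s).Nonempty) with hY'
  have hX'S : X' ⊆ S := by
    intro v hv
    simp only [hX', hF, Finset.mem_image, Finset.mem_filter] at hv
    obtain ⟨e, ⟨he, -⟩, rfl⟩ := hv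
    exact (Finset.mem_product.mp (hE₀ he)).1
  have hY'T : Y' ⊆ T := Finset.filter_subset _ _
  set P1 := side (F ∪ E₀.filter (fun e => e.2 ∈ Y')) X' m' with hP1
  set P3 := sJ2.image (shiftN N) with hP3
  -- P1 ∪ sJ1 ∪ P3 ⊆ s.biUnion nbr
  have hsub : P1 ∪ sJ1 ∪ P3 ⊆ s.biUnion (nbr E₀ T m' N) := by
    intro z hz
    simp only [Finset.mem_union] at hz
    rw [Finset.mem_biUnion]
    rcases hz with (hz | hz) | hz
    · rw [hP1, mem_side] at hz
      rcases hz with ⟨e, he, rfl⟩ | ⟨w, hw, i, hi, rfl⟩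
      · rw [Finset.mem_union] at he
        rcases he with he | he
        · rw [hF, Finset.mem_filter] at he
          exact ⟨Sum.inl e, he.2, by simp [nbr, he.1]⟩
        · rw [Finset.mem_filter] at he
          obtain ⟨he, hY⟩ := he
          rw [hY', Finset.mem_filter] at hY
          obtain ⟨htT, c, hc⟩ := hY
          rw [Finset.mem_inter, mem_copies] at hc
          obtain ⟨⟨j, hj, rfl⟩, hcs⟩ := hc
          refine ⟨_, hcs, ?_⟩
          simp only [nbr, if_pos (⟨htT, hj⟩ : e.2 ∈ T ∧ j < m' e.2)]
          exact Finset.mem_image_of_mem _ (Finset.mem_filter.mpr ⟨he, rfl⟩)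
      · rw [hX', Finset.mem_image] at hw
        obtain ⟨e, he, rfl⟩ := hw
        rw [hF, Finset.mem_filter] at he
        refine ⟨Sum.inl e, he.2, ?_⟩
        simp only [nbr, if_pos he.1]
        exact Finset.mem_insert_of_mem (mem_copies.mpr ⟨i, hi, rfl⟩)
    · rw [hsJ1, Finset.mem_filter, hsJ, Finset.mem_sdiff] at hz
      obtain ⟨⟨hzs, hzn⟩, hzl⟩ := hz
      obtain ⟨e, rfl⟩ := Sum.isLeft_iff.mp hzl
      have heE : e ∉ E₀ := by
        intro he
        exact hzn (Finset.mem_union_left _ (Finset.mem_inter.mpr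
          ⟨hzs, Finset.mem_image_of_mem _ he⟩))
      exact ⟨Sum.inl e, hzs, by simp [nbr, heE]⟩
    · rw [hP3, Finset.mem_image] at hz
      obtain ⟨x, hx, rfl⟩ := hz
      rw [hsJ2, Finset.mem_filter, hsJ, Finset.mem_sdiff] at hx
      obtain ⟨⟨hxs, hxn⟩, hxr⟩ := hx
      obtain ⟨⟨v, j⟩, rfl⟩ := Sum.isRight_iff.mp hxr
      have hnot : ¬ (v ∈ T ∧ j < m' v) := by
        rintro ⟨hvT, hjv⟩
        exact hxn (Finset.mem_union_right _ (Finset.mem_inter.mpr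
          ⟨hxs, Finset.mem_biUnion.mpr ⟨v, hvT, mem_copies.mpr ⟨j, hjv, rfl⟩⟩⟩))
      exact ⟨Sum.inr (v, j), hxs, by simp [nbr, if_neg hnot, shiftN]⟩
  -- cardinalities
  have hcard1 : P1.card = (F ∪ E₀.filter (fun e => e.2 ∈ Y')).card + ∑ v ∈ X', m' v :=
    card_side _ _ _
  have hmle : ∀ v ∈ S, m' v ≤ N := fun v hv => Finset.single_le_sum (fun _ _ => Nat.zero_le _) hv
  -- disjointness
  have hd12 : Disjoint P1 sJ1 := by
    rw [Finset.disjoint_left]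
    intro z hz hz1
    rw [hP1, mem_side] at hz
    rw [hsJ1, Finset.mem_filter, hsJ, Finset.mem_sdiff] at hz1
    obtain ⟨⟨hzs, hzn⟩, hzl⟩ := hz1
    obtain ⟨e, rfl⟩ := Sum.isLeft_iff.mp hzl
    rcases hz with ⟨e', he', he⟩ | ⟨w, hw, i, hi, h⟩
    · obtain rfl := Sum.inl_injective he
      rw [Finset.mem_union] at he'
      have heE : e ∈ E₀ := by
        rcases he' with h | h
        · exact (Finset.mem_filter.mp h).1
        · exact (Finset.mem_filter.mp h).1
      exact hzn (Finset.mem_union_left _ (Finset.mem_inter.mpr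
        ⟨hzs, Finset.mem_image_of_mem _ heE⟩))
    · simp at h
  have hd13 : Disjoint P1 P3 := by
    rw [Finset.disjoint_left]
    intro z hz hz3
    rw [hP3, Finset.mem_image] at hz3
    obtain ⟨x, hx, rfl⟩ := hz3
    rw [hsJ2, Finset.mem_filter] at hx
    obtain ⟨⟨v, j⟩, rfl⟩ := Sum.isRight_iff.mp hx.2
    rw [hP1, mem_side] at hz
    rcases hz with ⟨e, he, h⟩ | ⟨w, hw, i, hi, h⟩
    · simp [shiftN] at h
    · simp only [shiftN, Sum.map_inr, Sum.inr.injEq, Prod.mk.injEq] at h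
      obtain ⟨h1, h2⟩ := h
      have := hmle w (hX'S hw)
      omega
  have hd23 : Disjoint sJ1 P3 := by
    rw [Finset.disjoint_left]
    intro z hz hz3
    rw [hsJ1, Finset.mem_filter] at hz
    rw [hP3, Finset.mem_image] at hz3
    obtain ⟨x, hx, rfl⟩ := hz3
    rw [hsJ2, Finset.mem_filter] at hx
    obtain ⟨⟨v, j⟩, rfl⟩ := Sum.isRight_iff.mp hx.2
    simp [shiftN] at hz
  -- counting the union
  have hbig : P1.card + sJ1.card + sJ2.card ≤ (s.biUnion (nbr E₀ T m' N)).card := by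
    have h3 : P3.card = sJ2.card := Finset.card_image_of_injective _ (shiftN_injective N)
    calc P1.card + sJ1.card + sJ2.card
        = (P1 ∪ sJ1 ∪ P3).card := by
          rw [Finset.card_union_of_disjoint, Finset.card_union_of_disjoint hd12, h3]
          exact Finset.disjoint_union_left.mpr ⟨hd13, hd23⟩
      _ ≤ _ := Finset.card_le_card hsub
  -- upper bound on s.card
  have hcover : s ⊆ sA1 ∪ sA2 ∪ sJ1 ∪ sJ2 := by
    intro z hz
    by_cases h : z ∈ sA1 ∪ sA2
    · exact Finset.mem_union_left _ (Finset.mem_union_left _ h)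
    · have hzJ : z ∈ sJ := Finset.mem_sdiff.mpr ⟨hz, h⟩
      rcases z with e | p
      · exact Finset.mem_union_left _ (Finset.mem_union_right _ (Finset.mem_filter.mpr ⟨hzJ, rfl⟩))
      · exact Finset.mem_union_right _ (Finset.mem_filter.mpr ⟨hzJ, rfl⟩)
  have hscard : s.card ≤ sA1.card + sA2.card + sJ1.card + sJ2.card := by
    calc s.card ≤ (sA1 ∪ sA2 ∪ sJ1 ∪ sJ2).card := Finset.card_le_card hcover
      _ ≤ _ := by
        refine le_trans (Finset.card_union_le _ _) ?_
        refine Nat.add_le_add_right (le_trans (Finset.card_union_le _ _) ?_) _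
        exact Nat.add_le_add_right (Finset.card_union_le _ _) _
  -- |sA1| = |F|
  have hA1 : sA1.card = F.card := by
    have : sA1 = F.image Sum.inl := by
      ext z
      simp only [hsA1, hF, Finset.mem_inter, Finset.mem_image, Finset.mem_filter]
      constructor
      · rintro ⟨hzs, e, he, rfl⟩; exact ⟨e, ⟨he, hzs⟩, rfl⟩
      · rintro ⟨e, ⟨he, hes⟩, rfl⟩; exact ⟨hes, e, he, rfl⟩
    rw [this, Finset.card_image_of_injective _ Sum.inl_injective]
  -- |sA2| ≤ ∑_{Y'} m'
  have hA2 : sA2.card ≤ ∑ t ∈ Y', m' t := by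
    have hsub2 : sA2 ⊆ Y'.biUnion (fun t => copies t (m' t)) := by
      intro z hz
      rw [hsA2, Finset.mem_inter, Finset.mem_biUnion] at hz
      obtain ⟨hzs, t, htT, hzc⟩ := hz
      exact Finset.mem_biUnion.mpr ⟨t, Finset.mem_filter.mpr
        ⟨htT, ⟨z, Finset.mem_inter.mpr ⟨hzc, hzs⟩⟩⟩, hzc⟩
    calc sA2.card ≤ _ := Finset.card_le_card hsub2
      _ ≤ ∑ t ∈ Y', (copies t (m' t)).card := Finset.card_biUnion_le
      _ = ∑ t ∈ Y', m' t := by simp [card_copies]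
  -- union/intersection arithmetic
  have hFE : F.card + (E₀.filter (fun e => e.2 ∈ Y')).card ≤
      (F ∪ E₀.filter (fun e => e.2 ∈ Y')).card + edgesBetween E₀ X' Y' := by
    rw [← Finset.card_union_add_card_inter]
    refine Nat.add_le_add_left (Finset.card_le_card ?_) _
    intro e he
    rw [Finset.mem_inter, hF, Finset.mem_filter, Finset.mem_filter] at he
    obtain ⟨⟨heE, hes⟩, -, heY⟩ := he
    exact Finset.mem_filter.mpr ⟨heE, Finset.mem_image_of_mem _ (Finset.mem_filter.mpr ⟨heE, hes⟩), heY⟩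
  have hc := hcond X' hX'S Y' hY'T
  omega


lemma exists_subgraph (S T : Finset α) (E₀ : Finset (α × α)) (hE₀ : E₀ ⊆ S ×ˢ T)
    (m' : α → ℕ) (hγ : ∑ v ∈ S, m' v = ∑ v ∈ T, m' v)
    (hcond : ∀ X ⊆ S, ∀ Y ⊆ T,
      (∑ v ∈ Y, m' v) + edgesBetween E₀ X Y ≤
        (∑ v ∈ X, m' v) + (E₀.filter (fun e => e.2 ∈ Y)).card) :
    ∃ E : Finset (α × α), E ⊆ E₀ ∧
      (∀ s ∈ S, degS E s = m' s) ∧ (∀ t ∈ T, degT E t = m' t) := by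
  classical
  set N := ∑ v ∈ S, m' v with hN
  obtain ⟨f, hfinj, hf⟩ :=
    (Finset.all_card_le_biUnion_card_iff_exists_injective (nbr E₀ T m' N)).mp
      (hall_condition S T E₀ hE₀ m' hcond)
  set A := side E₀ T m' with hA
  set B := side E₀ S m' with hB
  -- image of A under f is B
  have himg : A.image f ⊆ B := by
    intro x hx
    rw [Finset.mem_image] at hx
    obtain ⟨a, ha, rfl⟩ := hx
    rw [hA, mem_side] at ha
    have hfa := hf a
    rcases ha with ⟨e, he, rfl⟩ | ⟨t, htT, j, hj, rfl⟩
    · rw [nbr, if_pos he] at hfa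
      rcases Finset.mem_insert.mp hfa with h | h
      · rw [h, hB, mem_side]
        exact Or.inl ⟨e, he, rfl⟩
      · rw [hB, mem_side]
        rcases mem_copies.mp h with ⟨i, hi, hcopy⟩
        exact Or.inr ⟨e.1, (Finset.mem_product.mp (hE₀ he)).1, i, hi, hcopy⟩
    · rw [nbr, if_pos ⟨htT, hj⟩] at hfa
      rw [Finset.mem_image] at hfa
      obtain ⟨e, he, h⟩ := hfa
      rw [← h, hB, mem_side]
      exact Or.inl ⟨e, (Finset.mem_filter.mp he).1, rfl⟩
  have hcardAB : B.card ≤ (A.image f).card := by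
    rw [Finset.card_image_of_injective _ hfinj, hA, hB, card_side, card_side, ← hγ]
  have hAB : A.image f = B := Finset.eq_of_subset_of_card_le himg hcardAB
  have hBsurj : ∀ x ∈ B, ∃ a ∈ A, f a = x := by
    intro x hx
    rw [← hAB, Finset.mem_image] at hx
    obtain ⟨a, ha, h⟩ := hx
    exact ⟨a, ha, h⟩
  refine ⟨E₀.filter (fun e => f (Sum.inl e) ≠ Sum.inl e), Finset.filter_subset _ _, ?_, ?_⟩
  · -- degS
    intro v hv
    rw [degS, Finset.filter_filter]
    rw [← card_copies v (m' v)]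
    apply Finset.card_nbij (fun e => f (Sum.inl e))
    · intro e he
      rw [Finset.mem_coe, Finset.mem_filter] at he
      obtain ⟨heE, hne, rfl⟩ := he
      have hfa := hf (Sum.inl e)
      rw [nbr, if_pos heE] at hfa
      rcases Finset.mem_insert.mp hfa with h | h
      · exact absurd h hne
      · exact h
    · intro a ha b hb h
      exact Sum.inl_injective (hfinj h)
    · intro c hc
      simp only [Finset.coe_filter, Set.mem_image, Set.mem_setOf_eq]
      have hcB : c ∈ B := by
        rw [hB, mem_side]
        rcases mem_copies.mp hc with ⟨i, hi, rfl⟩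
        exact Or.inr ⟨v, hv, i, hi, rfl⟩
      obtain ⟨a, haA, hfa⟩ := hBsurj c hcB
      rw [hA, mem_side] at haA
      rcases haA with ⟨e, he, rfl⟩ | ⟨t, htT, j, hj, rfl⟩
      · have hmem := hf (Sum.inl e)
        rw [nbr, if_pos he] at hmem
        rcases Finset.mem_insert.mp hmem with h | h
        · rw [hfa] at h
          rcases mem_copies.mp hc with ⟨i, hi, hci⟩
          rw [hci] at h
          exact absurd h (by simp)
        · rw [hfa] at h
          rcases mem_copies.mp hc with ⟨i, hi, hci⟩
          rcases mem_copies.mp h with ⟨i', hi', hci'⟩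
          have : e.1 = v := by
            rw [hci] at hci'
            exact (congrArg Prod.fst (Sum.inr.inj hci')).symm
          refine ⟨e, ⟨he, ?_, this⟩, hfa⟩
          intro hEq
          rw [hEq] at hfa
          rw [← hfa] at hci
          exact absurd hci (by simp)
      · -- a is a copy node, f a lands in inl image, contradiction with c inr
        have hmem := hf (Sum.inr (t, j))
        rw [nbr, if_pos ⟨htT, hj⟩, Finset.mem_image] at hmem
        obtain ⟨e, -, h⟩ := hmem
        rw [hfa] at h
        rcases mem_copies.mp hc with ⟨i, hi, hci⟩
        rw [hci] at h
        exact absurd h (by simp)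
  · -- degT
    intro t ht
    rw [degT, Finset.filter_filter]
    have hcimg : ((E₀.filter (fun e => f (Sum.inl e) ≠ Sum.inl e ∧ e.2 = t)).image
          (Sum.inl : α × α → V α)).card
        = (E₀.filter (fun e => f (Sum.inl e) ≠ Sum.inl e ∧ e.2 = t)).card :=
      Finset.card_image_of_injective _ Sum.inl_injective
    rw [← hcimg, ← card_copies t (m' t)]
    symm
    apply Finset.card_nbij f
    · intro c hc
      rcases mem_copies.mp hc with ⟨j, hj, rfl⟩
      have hmem := hf (Sum.inr (t, j))
      rw [nbr, if_pos ⟨ht, hj⟩, Finset.mem_image] at hmem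
      obtain ⟨e, he, h⟩ := hmem
      rw [Finset.mem_filter] at he
      rw [← h, Finset.mem_coe, Finset.mem_image]
      refine ⟨e, Finset.mem_filter.mpr ⟨he.1, ?_, he.2⟩, rfl⟩
      intro hEq
      exact absurd (hfinj (hEq.trans h)) (by simp)
    · intro a ha b hb h
      exact hfinj h
    · intro x hx
      simp only [Finset.coe_image, Finset.coe_filter, Set.mem_image, Set.mem_setOf_eq] at hx
      obtain ⟨e, ⟨heE, hne, het⟩, rfl⟩ := hx
      have hxB : Sum.inl e ∈ B := by
        rw [hB, mem_side]; exact Or.inl ⟨e, heE, rfl⟩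
      obtain ⟨a, haA, hfa⟩ := hBsurj _ hxB
      rw [hA, mem_side] at haA
      rcases haA with ⟨e', he', rfl⟩ | ⟨t', ht'T, j, hj, rfl⟩
      · have hmem := hf (Sum.inl e')
        rw [nbr, if_pos he'] at hmem
        rcases Finset.mem_insert.mp hmem with h | h
        · rw [hfa] at h
          obtain rfl := Sum.inl_injective h
          exact absurd hfa hne
        · rw [hfa] at h
          rcases mem_copies.mp h with ⟨i, hi, hci⟩
          exact absurd hci (by simp)
      · have hmem := hf (Sum.inr (t', j))
        rw [nbr, if_pos ⟨ht'T, hj⟩, Finset.mem_image] at hmem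
        obtain ⟨e'', he'', h⟩ := hmem
        rw [hfa] at h
        obtain rfl := Sum.inl_injective h
        have : t' = t := by
          have := (Finset.mem_filter.mp he'').2
          rw [← het, this]
        subst this
        exact ⟨Sum.inr (t', j), Finset.mem_coe.mpr (mem_copies.mpr ⟨j, hj, rfl⟩), hfa⟩

end OreAux

/-- **Ore's theorem (Theorem 10 of the paper).** A simple bigraph `G₀ = (S,T;E₀)` has
a subgraph fitting a degree-specification `(m_S, m_T)` with
`m̃_S(S) = m̃_T(T) = γ` iff `m̃_S(X) + m̃_T(Y) − d_{G₀}(X,Y) ≤ γ` for every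
`X ⊆ S` and `Y ⊆ T`. -/
theorem ore_degree_specified_subgraph
    (S T : Finset α) (hST : Disjoint S T) (hS : S.Nonempty) (hT : T.Nonempty)
    (E₀ : Finset (α × α)) (hE₀ : E₀ ⊆ S ×ˢ T)
    (m : α → ℤ) (γ : ℤ)
    (hγS : ∑ v ∈ S, m v = γ) (hγT : ∑ v ∈ T, m v = γ) :
    (∃ E : Finset (α × α), E ⊆ E₀ ∧
        (∀ s ∈ S, (degS E s : ℤ) = m s) ∧ (∀ t ∈ T, (degT E t : ℤ) = m t))
    ↔
    (∀ X ⊆ S, ∀ Y ⊆ T,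
      (∑ v ∈ X, m v) + (∑ v ∈ Y, m v) - (edgesBetween E₀ X Y : ℤ) ≤ γ) := by
  classical
  constructor
  · rintro ⟨E, hE, hdS, hdT⟩ X hX Y hY
    have hfibS : (E.filter (fun e => e.1 ∈ X)).card = ∑ v ∈ X, degS E v := by
      rw [Finset.card_eq_sum_card_fiberwise
        (f := Prod.fst) (s := E.filter (fun e => e.1 ∈ X)) (t := X) (fun e he => (Finset.mem_filter.mp he).2)]
      refine Finset.sum_congr rfl fun v hv => ?_
      rw [degS]
      congr 1
      ext e
      simp only [Finset.mem_filter]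
      constructor
      · rintro ⟨⟨he, -⟩, h2⟩; exact ⟨he, h2⟩
      · rintro ⟨he, h2⟩; exact ⟨⟨he, h2 ▸ hv⟩, h2⟩
    have hfibT : (E.filter (fun e => e.2 ∈ Y)).card = ∑ v ∈ Y, degT E v := by
      rw [Finset.card_eq_sum_card_fiberwise
        (f := Prod.snd) (s := E.filter (fun e => e.2 ∈ Y)) (t := Y) (fun e he => (Finset.mem_filter.mp he).2)]
      refine Finset.sum_congr rfl fun v hv => ?_
      rw [degT]
      congr 1
      ext e
      simp only [Finset.mem_filter]
      constructor
      · rintro ⟨⟨he, -⟩, h2⟩; exact ⟨he, h2⟩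
      · rintro ⟨he, h2⟩; exact ⟨⟨he, h2 ▸ hv⟩, h2⟩
    have hcard : (E.filter (fun e => e.1 ∈ X)).card + (E.filter (fun e => e.2 ∈ Y)).card
        = ((E.filter (fun e => e.1 ∈ X)) ∪ (E.filter (fun e => e.2 ∈ Y))).card
          + edgesBetween E X Y := by
      rw [← Finset.card_union_add_card_inter]
      congr 1
      rw [edgesBetween]
      congr 1
      ext e
      simp only [Finset.mem_inter, Finset.mem_filter]
      tauto
    have hEcard : ((E.filter (fun e => e.1 ∈ X)) ∪ (E.filter (fun e => e.2 ∈ Y))).card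
        ≤ E.card :=
      Finset.card_le_card (Finset.union_subset (Finset.filter_subset _ _)
        (Finset.filter_subset _ _))
    have hEfib : E.card = ∑ v ∈ S, degS E v :=
      Finset.card_eq_sum_card_fiberwise
        (f := Prod.fst) (fun e he => (Finset.mem_product.mp (hE₀ (hE he))).1)
    have hEγ : (E.card : ℤ) = γ := by
      rw [hEfib]
      push_cast
      rw [Finset.sum_congr rfl hdS, hγS]
    have hle : edgesBetween E X Y ≤ edgesBetween E₀ X Y :=
      Finset.card_le_card (Finset.filter_subset_filter _ hE)
    have hmX : ∑ v ∈ X, m v = ((E.filter (fun e => e.1 ∈ X)).card : ℤ) := by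
      rw [hfibS]
      push_cast
      exact (Finset.sum_congr rfl fun v hv => hdS v (hX hv)).symm
    have hmY : ∑ v ∈ Y, m v = ((E.filter (fun e => e.2 ∈ Y)).card : ℤ) := by
      rw [hfibT]
      push_cast
      exact (Finset.sum_congr rfl fun v hv => hdT v (hY hv)).symm
    rw [hmX, hmY]
    have hcard' : ((E.filter (fun e => e.1 ∈ X)).card : ℤ)
        + ((E.filter (fun e => e.2 ∈ Y)).card : ℤ)
        = (((E.filter (fun e => e.1 ∈ X)) ∪ (E.filter (fun e => e.2 ∈ Y))).card : ℤ)
          + (edgesBetween E X Y : ℤ) := by exact_mod_cast hcard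
    have h1 : ((((E.filter (fun e => e.1 ∈ X)) ∪ (E.filter (fun e => e.2 ∈ Y))).card : ℤ))
        ≤ γ := by rw [← hEγ]; exact_mod_cast hEcard
    have h2 : (edgesBetween E X Y : ℤ) ≤ (edgesBetween E₀ X Y : ℤ) := by exact_mod_cast hle
    linarith
  · intro h
    have hnonnegS : ∀ v ∈ S, 0 ≤ m v := by
      intro v hv
      have h0 := h (S.erase v) (Finset.erase_subset _ _) ∅ (Finset.empty_subset _)
      have hsum : m v + ∑ x ∈ S.erase v, m x = γ := by
        rw [Finset.add_sum_erase _ _ hv, hγS]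
      have hedge : edgesBetween E₀ (S.erase v) ∅ = 0 := by
        simp [edgesBetween]
      rw [hedge] at h0
      simp at h0
      linarith
    have hnonnegT : ∀ v ∈ T, 0 ≤ m v := by
      intro v hv
      have h0 := h ∅ (Finset.empty_subset _) (T.erase v) (Finset.erase_subset _ _)
      have hsum : m v + ∑ x ∈ T.erase v, m x = γ := by
        rw [Finset.add_sum_erase _ _ hv, hγT]
      have hedge : edgesBetween E₀ ∅ (T.erase v) = 0 := by
        simp [edgesBetween]
      rw [hedge] at h0
      simp at h0
      linarith
    set m' : α → ℕ := fun v => (m v).toNat with hm'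
    have hcastS : ∀ X ⊆ S, ((∑ v ∈ X, m' v : ℕ) : ℤ) = ∑ v ∈ X, m v := by
      intro X hX
      push_cast
      exact Finset.sum_congr rfl fun v hv => Int.toNat_of_nonneg (hnonnegS v (hX hv))
    have hcastT : ∀ Y ⊆ T, ((∑ v ∈ Y, m' v : ℕ) : ℤ) = ∑ v ∈ Y, m v := by
      intro Y hY
      push_cast
      exact Finset.sum_congr rfl fun v hv => Int.toNat_of_nonneg (hnonnegT v (hY hv))
    have hγ' : ∑ v ∈ S, m' v = ∑ v ∈ T, m' v := by
      have : ((∑ v ∈ S, m' v : ℕ) : ℤ) = ((∑ v ∈ T, m' v : ℕ) : ℤ) := by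
        rw [hcastS S le_rfl, hcastT T le_rfl, hγS, hγT]
      exact_mod_cast this
    have hcond : ∀ X ⊆ S, ∀ Y ⊆ T,
        (∑ v ∈ Y, m' v) + edgesBetween E₀ X Y ≤
          (∑ v ∈ X, m' v) + (E₀.filter (fun e => e.2 ∈ Y)).card := by
      intro X hX Y hY
      have hsplit : edgesBetween E₀ (S \ X) Y + edgesBetween E₀ X Y
          = (E₀.filter (fun e => e.2 ∈ Y)).card := by
        rw [edgesBetween, edgesBetween, ← Finset.card_union_of_disjoint]
        · rw [← Finset.filter_or]
          congr 1
          apply Finset.filter_congr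
          intro e he
          have h1 : e.1 ∈ S := (Finset.mem_product.mp (hE₀ he)).1
          by_cases hx : e.1 ∈ X <;> simp [Finset.mem_sdiff, h1, hx]
        · rw [Finset.disjoint_left]
          intro e he1 he2
          rw [Finset.mem_filter] at he1 he2
          exact (Finset.mem_sdiff.mp he1.2.1).2 he2.2.1
      have h0 := h (S \ X) Finset.sdiff_subset Y hY
      have hsd : ∑ v ∈ S \ X, m v = γ - ∑ v ∈ X, m v := by
        rw [Finset.sum_sdiff_eq_sub hX, hγS]
      have hZ : ((∑ v ∈ Y, m' v : ℕ) : ℤ) + ((edgesBetween E₀ X Y : ℕ) : ℤ)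
          ≤ ((∑ v ∈ X, m' v : ℕ) : ℤ) + (((E₀.filter (fun e => e.2 ∈ Y)).card : ℕ) : ℤ) := by
        rw [hcastS X hX, hcastT Y hY]
        have hsplit' : (edgesBetween E₀ (S \ X) Y : ℤ) + (edgesBetween E₀ X Y : ℤ)
            = ((E₀.filter (fun e => e.2 ∈ Y)).card : ℤ) := by exact_mod_cast hsplit
        rw [hsd] at h0
        linarith
      exact_mod_cast hZ
    obtain ⟨E, hE, hdS, hdT⟩ := OreAux.exists_subgraph S T E₀ hE₀ m' hγ' hcond
    refine ⟨E, hE, fun s hs => ?_, fun t ht => ?_⟩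
    · rw [hdS s hs]
      exact Int.toNat_of_nonneg (hnonnegS s hs)
    · rw [hdT t ht]
      exact Int.toNat_of_nonneg (hnonnegT t ht)
end
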